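/- Define b : ℕ → ℤ by b m = ((B^(m−3)).mulVec ![0,0,0,1]) 2 for m ≥ 3 and b m = 0 for m < 3. Then for every m ≥ 1, 21·(∑_{k=0}^{⌊m/2⌋} b (m − 2k)) = 2^m + w(m), where w(m) = −22, −2, −4, −8, −16, 10 according as m ≡ 0, 1, 2, 3, 4, 5 (mod 6). -/
import Mathlib

def B : Matrix (Fin 4) (Fin 4) ℤ :=
  !![0, 0, 0, 1; 0, 1, 1, 0; 2, 1, 0, 0; 0, 0, 1, 1]

def b (m : ℕ) : ℤ :=
  if 3 ≤ m then ((B ^ (m - 3)).mulVec ![0, 0, 0, 1]) 2 else 0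

def rr (n : ℕ) : Fin 4 → ℤ :=
  if n % 3 = 0 then ![-1,-2,-2,5] else if n % 3 = 1 then ![5,-4,-4,3] else ![3,-8,6,-1]

lemma key (n : ℕ) : ∀ i, 7 * ((B ^ n).mulVec ![0,0,0,1]) i =
    2 ^ n * (![1,2,2,2] i) + rr n i := by
  induction n with
  | zero => decide
  | succ n ih =>
    have h0 := ih 0
    have h1 := ih 1
    have h2 := ih 2
    have h3 := ih 3
    have hp : (B ^ (n+1)).mulVec ![0,0,0,1] = B.mulVec ((B ^ n).mulVec ![0,0,0,1]) := by
      rw [Matrix.mulVec_mulVec, ← pow_succ']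
    intro i
    rw [hp]
    have hmod : n % 3 = 0 ∨ n % 3 = 1 ∨ n % 3 = 2 := by omega
    set u := (B ^ n).mulVec ![0,0,0,1] with hu
    rcases hmod with h | h | h <;>
      [(have h' : (n+1) % 3 = 1 := by omega);
       (have h' : (n+1) % 3 = 2 := by omega);
       (have h' : (n+1) % 3 = 0 := by omega)] <;>
      simp only [rr, h, h'] at * <;>
      fin_cases i <;>
      simp [Matrix.mulVec, dotProduct, Fin.sum_univ_four, B, Matrix.cons_val_zero,
        Matrix.cons_val_one, pow_succ] at * <;>
      linarith

lemma bval (m : ℕ) (h : 3 ≤ m) : 7 * b m =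
    2 ^ (m - 2) + (if m % 3 = 0 then -2 else if m % 3 = 1 then -4 else 6) := by
  have hk := key (m - 3) 2
  have hb : b m = ((B ^ (m - 3)).mulVec ![0,0,0,1]) 2 := by rw [b, if_pos h]
  have hmod : (m - 3) % 3 = m % 3 := by omega
  have hpow : (2:ℤ) ^ (m - 2) = 2 ^ (m - 3) * 2 := by
    rw [← pow_succ]; congr 1; omega
  rw [hb, hk, hpow, rr, hmod]
  simp only [Matrix.cons_val_two, Matrix.tail_cons, Matrix.head_cons]
  have h3 : m % 3 = 0 ∨ m % 3 = 1 ∨ m % 3 = 2 := by omega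
  rcases h3 with h | h | h <;> simp [h]

theorem count_a_sv1_37_1 (m : ℕ) (hm : 1 ≤ m) :
    21 * ∑ k ∈ Finset.range (m / 2 + 1), b (m - 2 * k) =
      2 ^ m + (if m % 6 = 0 then -22 else if m % 6 = 1 then -2 else if m % 6 = 2 then -4
        else if m % 6 = 3 then -8 else if m % 6 = 4 then -16 else 10) := by
  induction m using Nat.strong_induction_on with
  | _ m ih =>
  match m, hm with
  | 1, _ => decide
  | 2, _ => decide
  | (n+3), _ =>
    set m := n + 3 with hm3
    have h3 : 3 ≤ m := by omega
    have hsplit : ∑ k ∈ Finset.range (m / 2 + 1), b (m - 2 * k) =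
        b m + ∑ k ∈ Finset.range ((m - 2) / 2 + 1), b (m - 2 - 2 * k) := by
      have hd : m / 2 + 1 = ((m - 2) / 2 + 1) + 1 := by omega
      rw [hd, Finset.sum_range_succ']
      simp only [Nat.mul_zero, Nat.sub_zero]
      rw [add_comm]
      congr 1
      apply Finset.sum_congr rfl
      intro k _
      congr 1
      omega
    have hih := ih (m - 2) (by omega) (by omega)
    have hbv := bval m h3
    have hpow : (2:ℤ) ^ m = 4 * 2 ^ (m - 2) := by
      have h2 : m - 2 + 2 = m := by omega
      calc (2:ℤ) ^ m = 2 ^ (m - 2 + 2) := by rw [h2]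
        _ = 4 * 2 ^ (m - 2) := by ring
    rw [hsplit, mul_add, hih]
    have h6 : m % 6 = 0 ∨ m % 6 = 1 ∨ m % 6 = 2 ∨ m % 6 = 3 ∨ m % 6 = 4 ∨ m % 6 = 5 := by
      omega
    rcases h6 with h | h | h | h | h | h <;>
      [(have ha : (m-2) % 6 = 4 := by omega); (have ha : (m-2) % 6 = 5 := by omega);
       (have ha : (m-2) % 6 = 0 := by omega); (have ha : (m-2) % 6 = 1 := by omega);
       (have ha : (m-2) % 6 = 2 := by omega); (have ha : (m-2) % 6 = 3 := by omega)] <;>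
      (have hb3 : m % 3 = m % 6 % 3 := by omega) <;>
      rw [hb3, h] at hbv <;>
      simp only [h, ha] at * <;>
      norm_num at hbv ⊢ <;>
      linarith
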